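/- The operator T_g defined by (T_g η)_i = Σ_j P_{ij}(ν_{ij}^{(g)} ∗ η_j) is non-expansive in the supremum Cramér metric: for all families η, ζ of probability measures on ℝ with finite second moment, max_i ℓ_C((T_g η)_i, (T_g ζ)_i) ≤ max_i ℓ_C(η_i, ζ_i). -/

import Mathlib

open MeasureTheory
open scoped ENNReal NNReal

/-- The cumulative distribution function of a measure on ℝ. -/
noncomputable def cdfFn (μ : Measure ℝ) (x : ℝ) : ℝ := (μ (Set.Iic x)).toReal

/-- The Cramér distance: the L² distance between CDFs. -/
noncomputable def cramerDist (μ ν : Measure ℝ) : ℝ :=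
  Real.sqrt (∫ x, (cdfFn μ x - cdfFn ν x) ^ 2)


lemma measurable_measure_Iic (μ : Measure ℝ) : Measurable fun x => μ (Set.Iic x) :=
  Monotone.measurable (fun _ _ hab => measure_mono (Set.Iic_subset_Iic.2 hab))

lemma measurable_measure_Ioi (μ : Measure ℝ) : Measurable fun x => μ (Set.Ioi x) :=
  Antitone.measurable (fun _ _ hab => measure_mono (Set.Ioi_subset_Ioi hab))

lemma measurable_cdfFn (μ : Measure ℝ) : Measurable (cdfFn μ) :=
  (measurable_measure_Iic μ).ennreal_toReal

lemma cdfFn_nonneg (μ : Measure ℝ) (x : ℝ) : 0 ≤ cdfFn μ x := ENNReal.toReal_nonneg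

lemma cdfFn_le_one (μ : Measure ℝ) [IsProbabilityMeasure μ] (x : ℝ) : cdfFn μ x ≤ 1 := by
  have := prob_le_one (μ := μ) (s := Set.Iic x)
  simpa [cdfFn] using ENNReal.toReal_mono ENNReal.one_ne_top this

lemma ofReal_cdfFn (μ : Measure ℝ) [IsProbabilityMeasure μ] (x : ℝ) :
    ENNReal.ofReal (cdfFn μ x) = μ (Set.Iic x) :=
  ENNReal.ofReal_toReal (measure_ne_top μ _)

lemma one_sub_cdfFn (μ : Measure ℝ) [IsProbabilityMeasure μ] (x : ℝ) :
    ENNReal.ofReal (1 - cdfFn μ x) = μ (Set.Ioi x) := by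
  have h : μ (Set.Iic x) + μ (Set.Ioi x) = 1 := by
    rw [← Set.compl_Iic]
    simpa using measure_add_measure_compl (μ := μ) (measurableSet_Iic (a := x))
  have h2 : cdfFn μ x + (μ (Set.Ioi x)).toReal = 1 := by
    rw [cdfFn, ← ENNReal.toReal_add (measure_ne_top μ _) (measure_ne_top μ _), h]; simp
  rw [show (1 : ℝ) - cdfFn μ x = (μ (Set.Ioi x)).toReal by linarith]
  exact ENNReal.ofReal_toReal (measure_ne_top μ _)

lemma cdfFn_conv (μ κ : Measure ℝ) [IsProbabilityMeasure μ] [IsProbabilityMeasure κ] (x : ℝ) :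
    cdfFn (μ.conv κ) x = ∫ y, cdfFn κ (x - y) ∂μ := by
  have hker : Measurable fun y => κ (Set.Iic (x - y)) :=
    (measurable_measure_Iic κ).comp (measurable_const.sub measurable_id)
  have h1 : (μ.conv κ) (Set.Iic x) = ∫⁻ y, κ (Set.Iic (x - y)) ∂μ := by
    rw [Measure.conv, Measure.map_apply measurable_add measurableSet_Iic,
      Measure.prod_apply (measurable_add measurableSet_Iic)]
    congr 1
    ext y
    congr 1
    ext z
    simp [Set.mem_Iic, le_sub_iff_add_le, add_comm]
  rw [cdfFn, h1, ← integral_toReal hker.aemeasurable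
    (Filter.Eventually.of_forall fun y => measure_lt_top κ _)]
  rfl

lemma sq_lintegral_le (ρ : Measure ℝ) [IsProbabilityMeasure ρ] {f : ℝ → ℝ≥0∞}
    (hf : AEMeasurable f ρ) : (∫⁻ y, f y ∂ρ) ^ 2 ≤ ∫⁻ y, f y ^ 2 ∂ρ := by
  have hpq : Real.HolderConjugate 2 2 := by
    constructor <;> norm_num
  have h := ENNReal.lintegral_mul_le_Lp_mul_Lq ρ hpq hf aemeasurable_const (g := fun _ => 1)
  simp only [mul_one, ENNReal.one_rpow, lintegral_const, measure_univ, one_mul,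
    ENNReal.one_rpow] at h
  have h' : ∫⁻ y, f y ∂ρ ≤ (∫⁻ y, f y ^ (2:ℝ) ∂ρ) ^ (1/2 : ℝ) := by
    simpa using h
  calc (∫⁻ y, f y ∂ρ) ^ 2 ≤ ((∫⁻ y, f y ^ (2:ℝ) ∂ρ) ^ (1/2 : ℝ)) ^ 2 := by
        exact pow_le_pow_left' h' 2
    _ = ∫⁻ y, f y ^ (2:ℝ) ∂ρ := by
        rw [← ENNReal.rpow_natCast _ 2, ← ENNReal.rpow_mul]; norm_num
    _ = ∫⁻ y, f y ^ 2 ∂ρ := by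
        congr 1; ext y; rw [← ENNReal.rpow_natCast (f y) 2]; norm_num

lemma ofReal_sq_integral_le (ρ : Measure ℝ) [IsProbabilityMeasure ρ] {g : ℝ → ℝ}
    (hg : Measurable g) (hb : ∀ y, |g y| ≤ 1) :
    ENNReal.ofReal ((∫ y, g y ∂ρ) ^ 2) ≤ ∫⁻ y, ENNReal.ofReal (g y ^ 2) ∂ρ := by
  have hint : Integrable g ρ :=
    (integrable_const (1:ℝ)).mono' hg.aestronglyMeasurable
      (Filter.Eventually.of_forall fun y => by simpa using hb y)
  have h1 : (∫ y, g y ∂ρ) ^ 2 ≤ (∫ y, |g y| ∂ρ) ^ 2 := by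
    rw [← sq_abs (∫ y, g y ∂ρ)]
    have := norm_integral_le_integral_norm (f := g) (μ := ρ)
    simp only [Real.norm_eq_abs] at this
    exact pow_le_pow_left₀ (abs_nonneg _) this 2
  calc ENNReal.ofReal ((∫ y, g y ∂ρ) ^ 2) ≤ ENNReal.ofReal ((∫ y, |g y| ∂ρ) ^ 2) :=
        ENNReal.ofReal_le_ofReal h1
    _ = (ENNReal.ofReal (∫ y, |g y| ∂ρ)) ^ 2 := by
        rw [ENNReal.ofReal_pow (integral_nonneg fun y => abs_nonneg _)]
    _ = (∫⁻ y, ENNReal.ofReal (|g y|) ∂ρ) ^ 2 := by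
        rw [ofReal_integral_eq_lintegral_ofReal hint.abs
          (Filter.Eventually.of_forall fun y => abs_nonneg _)]
    _ ≤ ∫⁻ y, (ENNReal.ofReal (|g y|)) ^ 2 ∂ρ :=
        sq_lintegral_le ρ (hg.abs.ennreal_ofReal).aemeasurable
    _ = ∫⁻ y, ENNReal.ofReal (g y ^ 2) ∂ρ := by
        congr 1; ext y; rw [← ENNReal.ofReal_pow (abs_nonneg _), sq_abs]

lemma lintegral_sub_right (f : ℝ → ℝ≥0∞) (y : ℝ) :
    ∫⁻ x, f (x - y) = ∫⁻ x, f x := by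
  have := lintegral_add_right_eq_self (μ := (volume : Measure ℝ)) f (-y)
  simpa [sub_eq_add_neg] using this

lemma secondMoment_lt_top (μ : Measure ℝ) (h : MemLp id 2 μ) :
    ∫⁻ y, ENNReal.ofReal (y ^ 2) ∂μ < ∞ := by
  have h2 := h.2
  rw [eLpNorm_eq_lintegral_rpow_enorm_toReal (by norm_num) (by norm_num)] at h2
  simp only [ENNReal.toReal_ofNat, id_eq] at h2
  have h3 : ∫⁻ y, ‖y‖ₑ ^ (2:ℝ) ∂μ < ∞ := by
    by_contra hc
    push_neg at hc
    rw [top_le_iff.1 hc] at h2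
    simp [ENNReal.top_rpow_of_pos] at h2
  refine lt_of_le_of_lt (le_of_eq ?_) h3
  congr 1; ext y
  rw [ENNReal.rpow_two, Real.enorm_eq_ofReal_abs, ← ENNReal.ofReal_pow (abs_nonneg _), sq_abs]

lemma tail_neg (μ : Measure ℝ) {x : ℝ} (hx : x < 0) :
    μ (Set.Iic x) * ENNReal.ofReal (x ^ 2) ≤ ∫⁻ y, ENNReal.ofReal (y ^ 2) ∂μ := by
  calc μ (Set.Iic x) * ENNReal.ofReal (x ^ 2) = ∫⁻ _ in Set.Iic x, ENNReal.ofReal (x ^ 2) ∂μ := by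
        rw [setLIntegral_const, mul_comm]
    _ ≤ ∫⁻ y in Set.Iic x, ENNReal.ofReal (y ^ 2) ∂μ := by
        refine setLIntegral_mono (by measurability) fun y hy => ?_
        exact ENNReal.ofReal_le_ofReal (by nlinarith [Set.mem_Iic.1 hy])
    _ ≤ ∫⁻ y, ENNReal.ofReal (y ^ 2) ∂μ := setLIntegral_le_lintegral _ _

lemma tail_pos (μ : Measure ℝ) {x : ℝ} (hx : 0 < x) :
    μ (Set.Ioi x) * ENNReal.ofReal (x ^ 2) ≤ ∫⁻ y, ENNReal.ofReal (y ^ 2) ∂μ := by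
  calc μ (Set.Ioi x) * ENNReal.ofReal (x ^ 2) = ∫⁻ _ in Set.Ioi x, ENNReal.ofReal (x ^ 2) ∂μ := by
        rw [setLIntegral_const, mul_comm]
    _ ≤ ∫⁻ y in Set.Ioi x, ENNReal.ofReal (y ^ 2) ∂μ := by
        refine setLIntegral_mono (by measurability) fun y hy => ?_
        exact ENNReal.ofReal_le_ofReal (by nlinarith [Set.mem_Ioi.1 hy])
    _ ≤ ∫⁻ y, ENNReal.ofReal (y ^ 2) ∂μ := setLIntegral_le_lintegral _ _

lemma J_lt_top : ∫⁻ x in Set.Ioi (1:ℝ), (ENNReal.ofReal (x ^ 2))⁻¹ < ∞ := by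
  have hint : IntegrableOn (fun t : ℝ => t ^ (-2 : ℝ)) (Set.Ioi 1) :=
    integrableOn_Ioi_rpow_of_lt (by norm_num) one_pos
  have hfin := hint.hasFiniteIntegral
  rw [HasFiniteIntegral] at hfin
  refine lt_of_le_of_lt (setLIntegral_mono (by measurability) fun x hx => ?_) hfin
  have hx1 : (1:ℝ) < x := Set.mem_Ioi.1 hx
  have hx0 : (0:ℝ) < x := by linarith
  have h1 : x ^ (-2:ℝ) = (x ^ 2)⁻¹ := by
    rw [Real.rpow_neg hx0.le, Real.rpow_two]
  rw [Real.enorm_eq_ofReal_abs, h1, abs_of_nonneg (by positivity),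
    ← ENNReal.ofReal_inv_of_pos (by positivity)]

lemma J_neg_lt_top : ∫⁻ x in Set.Iic (-1:ℝ), (ENNReal.ofReal (x ^ 2))⁻¹ < ∞ := by
  have hmp : MeasurePreserving (fun x : ℝ => -x) volume volume :=
    Measure.measurePreserving_neg volume
  have hemb : MeasurableEmbedding (fun x : ℝ => -x) :=
    (MeasurableEquiv.neg ℝ).measurableEmbedding
  have h := hmp.setLIntegral_comp_preimage_emb hemb
    (fun x => (ENNReal.ofReal (x ^ 2))⁻¹) (Set.Iic (-1:ℝ))
  have hpre : (fun x : ℝ => -x) ⁻¹' Set.Iic (-1:ℝ) = Set.Ici (1:ℝ) := by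
    ext x; simp [le_neg]
  rw [hpre] at h
  simp only [neg_sq] at h
  rw [← h, show (volume : Measure ℝ).restrict (Set.Ici 1) = volume.restrict (Set.Ioi 1) from
    (Measure.restrict_congr_set MeasureTheory.Ioi_ae_eq_Ici).symm]
  exact J_lt_top

lemma int_tail_neg (μ : Measure ℝ) [IsProbabilityMeasure μ] (h : MemLp id 2 μ) :
    ∫⁻ x in Set.Iic (0:ℝ), μ (Set.Iic x) < ∞ := by
  have hCt : ∫⁻ y, ENNReal.ofReal (y ^ 2) ∂μ < ∞ := secondMoment_lt_top μ h
  set C := ∫⁻ y, ENNReal.ofReal (y ^ 2) ∂μ with hC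
  have hsplit : Set.Iic (0:ℝ) = Set.Iic (-1:ℝ) ∪ Set.Ioc (-1:ℝ) 0 :=
    (Set.Iic_union_Ioc_eq_Iic (by norm_num)).symm
  rw [hsplit]
  refine lt_of_le_of_lt (lintegral_union_le _ _ _) (ENNReal.add_lt_top.2 ⟨?_, ?_⟩)
  · have hb : ∀ x ∈ Set.Iic (-1:ℝ), μ (Set.Iic x) ≤ C * (ENNReal.ofReal (x ^ 2))⁻¹ := by
      intro x hx
      have hx1 : x ≤ -1 := Set.mem_Iic.1 hx
      have hpos : (0:ℝ) < x ^ 2 := by nlinarith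
      rw [← div_eq_mul_inv, ENNReal.le_div_iff_mul_le
        (Or.inl (by simpa using hpos.ne')) (Or.inl ENNReal.ofReal_ne_top)]
      exact tail_neg μ (by linarith)
    calc ∫⁻ x in Set.Iic (-1:ℝ), μ (Set.Iic x)
        ≤ ∫⁻ x in Set.Iic (-1:ℝ), C * (ENNReal.ofReal (x ^ 2))⁻¹ :=
          setLIntegral_mono (by measurability) hb
      _ = C * ∫⁻ x in Set.Iic (-1:ℝ), (ENNReal.ofReal (x ^ 2))⁻¹ :=
          lintegral_const_mul _ (by measurability)
      _ < ∞ := ENNReal.mul_lt_top hCt J_neg_lt_top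
  · calc ∫⁻ x in Set.Ioc (-1:ℝ) 0, μ (Set.Iic x)
        ≤ ∫⁻ _ in Set.Ioc (-1:ℝ) 0, 1 := lintegral_mono fun x => prob_le_one
      _ < ∞ := by rw [setLIntegral_const]; simp

lemma int_tail_pos (μ : Measure ℝ) [IsProbabilityMeasure μ] (h : MemLp id 2 μ) :
    ∫⁻ x in Set.Ioi (0:ℝ), μ (Set.Ioi x) < ∞ := by
  have hCt : ∫⁻ y, ENNReal.ofReal (y ^ 2) ∂μ < ∞ := secondMoment_lt_top μ h
  set C := ∫⁻ y, ENNReal.ofReal (y ^ 2) ∂μ with hC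
  have hsplit : Set.Ioi (0:ℝ) = Set.Ioc (0:ℝ) 1 ∪ Set.Ioi (1:ℝ) :=
    (Set.Ioc_union_Ioi_eq_Ioi (by norm_num)).symm
  rw [hsplit]
  refine lt_of_le_of_lt (lintegral_union_le _ _ _) (ENNReal.add_lt_top.2 ⟨?_, ?_⟩)
  · calc ∫⁻ x in Set.Ioc (0:ℝ) 1, μ (Set.Ioi x)
        ≤ ∫⁻ _ in Set.Ioc (0:ℝ) 1, 1 := lintegral_mono fun x => prob_le_one
      _ < ∞ := by rw [setLIntegral_const]; simp
  · have hb : ∀ x ∈ Set.Ioi (1:ℝ), μ (Set.Ioi x) ≤ C * (ENNReal.ofReal (x ^ 2))⁻¹ := by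
      intro x hx
      have hx1 : (1:ℝ) < x := Set.mem_Ioi.1 hx
      have hpos : (0:ℝ) < x ^ 2 := by nlinarith
      rw [← div_eq_mul_inv, ENNReal.le_div_iff_mul_le
        (Or.inl (by simpa using hpos.ne')) (Or.inl ENNReal.ofReal_ne_top)]
      exact tail_pos μ (by linarith)
    calc ∫⁻ x in Set.Ioi (1:ℝ), μ (Set.Ioi x)
        ≤ ∫⁻ x in Set.Ioi (1:ℝ), C * (ENNReal.ofReal (x ^ 2))⁻¹ :=
          setLIntegral_mono (by measurability) hb
      _ = C * ∫⁻ x in Set.Ioi (1:ℝ), (ENNReal.ofReal (x ^ 2))⁻¹ :=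
          lintegral_const_mul _ (by measurability)
      _ < ∞ := ENNReal.mul_lt_top hCt J_lt_top

lemma L_lt_top (μ₁ μ₂ : Measure ℝ) [IsProbabilityMeasure μ₁] [IsProbabilityMeasure μ₂]
    (h₁ : MemLp id 2 μ₁) (h₂ : MemLp id 2 μ₂) :
    ∫⁻ x, ENNReal.ofReal ((cdfFn μ₁ x - cdfFn μ₂ x) ^ 2) < ∞ := by
  have hDsq : ∀ x : ℝ, (cdfFn μ₁ x - cdfFn μ₂ x) ^ 2 ≤ |cdfFn μ₁ x - cdfFn μ₂ x| := by
    intro x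
    have h1 := cdfFn_nonneg μ₁ x; have h2 := cdfFn_nonneg μ₂ x
    have h3 := cdfFn_le_one μ₁ x; have h4 := cdfFn_le_one μ₂ x
    have habs : |cdfFn μ₁ x - cdfFn μ₂ x| ≤ 1 := by rw [abs_le]; constructor <;> linarith
    calc (cdfFn μ₁ x - cdfFn μ₂ x) ^ 2 = |cdfFn μ₁ x - cdfFn μ₂ x| ^ 2 := (sq_abs _).symm
      _ ≤ |cdfFn μ₁ x - cdfFn μ₂ x| := by nlinarith [abs_nonneg (cdfFn μ₁ x - cdfFn μ₂ x)]
  rw [← lintegral_add_compl (fun x => ENNReal.ofReal ((cdfFn μ₁ x - cdfFn μ₂ x) ^ 2))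
    (measurableSet_Iic (a := (0:ℝ)))]
  rw [Set.compl_Iic]
  refine ENNReal.add_lt_top.2 ⟨?_, ?_⟩
  · calc ∫⁻ x in Set.Iic (0:ℝ), ENNReal.ofReal ((cdfFn μ₁ x - cdfFn μ₂ x) ^ 2)
        ≤ ∫⁻ x in Set.Iic (0:ℝ), (μ₁ (Set.Iic x) + μ₂ (Set.Iic x)) := by
          refine setLIntegral_mono ((measurable_measure_Iic μ₁).add (measurable_measure_Iic μ₂)) fun x _ => ?_
          calc ENNReal.ofReal ((cdfFn μ₁ x - cdfFn μ₂ x) ^ 2)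
              ≤ ENNReal.ofReal (cdfFn μ₁ x + cdfFn μ₂ x) := by
                refine ENNReal.ofReal_le_ofReal ((hDsq x).trans ?_)
                have := cdfFn_nonneg μ₁ x; have := cdfFn_nonneg μ₂ x
                calc |cdfFn μ₁ x - cdfFn μ₂ x| ≤ |cdfFn μ₁ x| + |cdfFn μ₂ x| := abs_sub _ _
                  _ = cdfFn μ₁ x + cdfFn μ₂ x := by rw [abs_of_nonneg, abs_of_nonneg] <;> assumption
            _ ≤ ENNReal.ofReal (cdfFn μ₁ x) + ENNReal.ofReal (cdfFn μ₂ x) :=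
                ENNReal.ofReal_add_le
            _ = μ₁ (Set.Iic x) + μ₂ (Set.Iic x) := by rw [ofReal_cdfFn, ofReal_cdfFn]
      _ = (∫⁻ x in Set.Iic (0:ℝ), μ₁ (Set.Iic x)) + ∫⁻ x in Set.Iic (0:ℝ), μ₂ (Set.Iic x) :=
          lintegral_add_left (measurable_measure_Iic μ₁) _
      _ < ∞ := ENNReal.add_lt_top.2 ⟨int_tail_neg μ₁ h₁, int_tail_neg μ₂ h₂⟩
  · calc ∫⁻ x in Set.Ioi (0:ℝ), ENNReal.ofReal ((cdfFn μ₁ x - cdfFn μ₂ x) ^ 2)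
        ≤ ∫⁻ x in Set.Ioi (0:ℝ), (μ₁ (Set.Ioi x) + μ₂ (Set.Ioi x)) := by
          refine setLIntegral_mono ((measurable_measure_Ioi μ₁).add (measurable_measure_Ioi μ₂)) fun x _ => ?_
          calc ENNReal.ofReal ((cdfFn μ₁ x - cdfFn μ₂ x) ^ 2)
              ≤ ENNReal.ofReal ((1 - cdfFn μ₁ x) + (1 - cdfFn μ₂ x)) := by
                refine ENNReal.ofReal_le_ofReal ((hDsq x).trans ?_)
                have := cdfFn_le_one μ₁ x; have := cdfFn_le_one μ₂ x
                have : |cdfFn μ₁ x - cdfFn μ₂ x| = |(1 - cdfFn μ₂ x) - (1 - cdfFn μ₁ x)| := by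
                  congr 1; ring
                rw [this]
                calc |(1 - cdfFn μ₂ x) - (1 - cdfFn μ₁ x)|
                    ≤ |1 - cdfFn μ₂ x| + |1 - cdfFn μ₁ x| := abs_sub _ _
                  _ ≤ (1 - cdfFn μ₁ x) + (1 - cdfFn μ₂ x) := by
                      rw [abs_of_nonneg (by linarith), abs_of_nonneg (by linarith)]; linarith
            _ ≤ ENNReal.ofReal (1 - cdfFn μ₁ x) + ENNReal.ofReal (1 - cdfFn μ₂ x) :=
                ENNReal.ofReal_add_le
            _ = μ₁ (Set.Ioi x) + μ₂ (Set.Ioi x) := by rw [one_sub_cdfFn, one_sub_cdfFn]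
      _ = (∫⁻ x in Set.Ioi (0:ℝ), μ₁ (Set.Ioi x)) + ∫⁻ x in Set.Ioi (0:ℝ), μ₂ (Set.Ioi x) := by
          exact lintegral_add_left (measurable_measure_Ioi μ₁) _
      _ < ∞ := ENNReal.add_lt_top.2 ⟨int_tail_pos μ₁ h₁, int_tail_pos μ₂ h₂⟩


lemma cramerDist_eq (μ₁ μ₂ : Measure ℝ) :
    cramerDist μ₁ μ₂
      = Real.sqrt ((∫⁻ x, ENNReal.ofReal ((cdfFn μ₁ x - cdfFn μ₂ x) ^ 2)).toReal) := by
  rw [cramerDist, integral_eq_lintegral_of_nonneg_ae (f := fun x => (cdfFn μ₁ x - cdfFn μ₂ x) ^ 2)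
    (Filter.Eventually.of_forall fun x => sq_nonneg _)
    (((measurable_cdfFn μ₁).sub (measurable_cdfFn μ₂)).pow_const 2).aestronglyMeasurable]

lemma integrable_cdf_shift (κ μ : Measure ℝ) [IsProbabilityMeasure κ] [IsProbabilityMeasure μ]
    (x : ℝ) : Integrable (fun y => cdfFn κ (x - y)) μ :=
  (integrable_const (1:ℝ)).mono'
    (((measurable_cdfFn κ).comp (measurable_const.sub measurable_id)).aestronglyMeasurable)
    (Filter.Eventually.of_forall fun y => by
      rw [Real.norm_eq_abs, abs_of_nonneg (cdfFn_nonneg _ _)]; exact cdfFn_le_one κ _)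


/-- the operator `(T_g η)_i = Σ_j P_{ij} (ν_{ij}^{(g)} ∗ η_j)` is
non-expansive in the supremum Cramér metric:
`max_i ℓ_C((T_g η)_i, (T_g ζ)_i) ≤ max_i ℓ_C(η_i, ζ_i)`. -/
theorem Tg_nonexpansive_supCramer
    {S : Type*} [Fintype S] [Nonempty S]
    (P : S → S → ℝ≥0) (hP : ∀ i, ∑ j, P i j = 1)
    (ν : S → S → Measure ℝ) (hν : ∀ i j, IsProbabilityMeasure (ν i j))
    (η ζ : S → Measure ℝ)
    (hη : ∀ i, IsProbabilityMeasure (η i)) (hζ : ∀ i, IsProbabilityMeasure (ζ i))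
    (hηm : ∀ i, MemLp id 2 (η i)) (hζm : ∀ i, MemLp id 2 (ζ i)) :
    (⨆ i, cramerDist (∑ j, (P i j : ℝ≥0∞) • ((ν i j).conv (η j)))
                     (∑ j, (P i j : ℝ≥0∞) • ((ν i j).conv (ζ j))))
      ≤ ⨆ i, cramerDist (η i) (ζ i) := by
  classical
  set M := ⨆ i, cramerDist (η i) (ζ i) with hM
  set D : S → ℝ → ℝ := fun j x => cdfFn (η j) x - cdfFn (ζ j) x with hD
  have hDmeas : ∀ j, Measurable (D j) :=
    fun j => (measurable_cdfFn _).sub (measurable_cdfFn _)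
  have hDabs : ∀ j x, |D j x| ≤ 1 := by
    intro j x
    haveI := hη j; haveI := hζ j
    have h1 := cdfFn_nonneg (η j) x; have h2 := cdfFn_nonneg (ζ j) x
    have h3 := cdfFn_le_one (η j) x; have h4 := cdfFn_le_one (ζ j) x
    rw [abs_le]; constructor <;> simp only [hD] <;> linarith
  set L : S → ℝ≥0∞ := fun j => ∫⁻ x, ENNReal.ofReal (D j x ^ 2) with hL
  have hLfin : ∀ j, L j ≠ ∞ := by
    intro j; haveI := hη j; haveI := hζ j
    exact (L_lt_top (η j) (ζ j) (hηm j) (hζm j)).ne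
  have hcram : ∀ j, cramerDist (η j) (ζ j) = Real.sqrt ((L j).toReal) :=
    fun j => cramerDist_eq (η j) (ζ j)
  have hbdd : BddAbove (Set.range fun j => cramerDist (η j) (ζ j)) :=
    Set.Finite.bddAbove (Set.finite_range _)
  have hMnonneg : 0 ≤ M := by
    obtain ⟨j0⟩ := (inferInstance : Nonempty S)
    exact (Real.sqrt_nonneg _).trans ((hcram j0).symm.le.trans (le_ciSup hbdd j0))
  have hLM : ∀ j, L j ≤ ENNReal.ofReal (M ^ 2) := by
    intro j
    have h2 : Real.sqrt ((L j).toReal) ≤ M := (hcram j).symm.le.trans (le_ciSup hbdd j)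
    have h3 : (L j).toReal ≤ M ^ 2 := by
      calc (L j).toReal = Real.sqrt ((L j).toReal) ^ 2 :=
            (Real.sq_sqrt ENNReal.toReal_nonneg).symm
        _ ≤ M ^ 2 := pow_le_pow_left₀ (Real.sqrt_nonneg _) h2 2
    exact (ENNReal.le_ofReal_iff_toReal_le (hLfin j) (by positivity)).2 h3
  refine ciSup_le fun i => ?_
  -- CDFs of the mixtures
  have hcdfT : ∀ (θ : S → Measure ℝ), (∀ k, IsProbabilityMeasure (θ k)) → ∀ x : ℝ,
      cdfFn (∑ j, (P i j : ℝ≥0∞) • ((ν i j).conv (θ j))) x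
        = ∑ j, (P i j : ℝ) * cdfFn ((ν i j).conv (θ j)) x := by
    intro θ hθ x
    haveI := fun k => hθ k; haveI := fun k => hν i k
    rw [cdfFn, Measure.finset_sum_apply, ENNReal.toReal_sum]
    · refine Finset.sum_congr rfl fun j _ => ?_
      rw [Measure.smul_apply, smul_eq_mul, ENNReal.toReal_mul, ENNReal.coe_toReal, cdfFn]
    · intro j _
      rw [Measure.smul_apply, smul_eq_mul]
      exact ENNReal.mul_ne_top ENNReal.coe_ne_top (measure_ne_top _ _)
  -- pointwise bound
  have key : ∀ x : ℝ,
      ENNReal.ofReal ((cdfFn (∑ j, (P i j : ℝ≥0∞) • ((ν i j).conv (η j))) x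
          - cdfFn (∑ j, (P i j : ℝ≥0∞) • ((ν i j).conv (ζ j))) x) ^ 2)
        ≤ ∑ j, (P i j : ℝ≥0∞) * ∫⁻ y, ENNReal.ofReal (D j (x - y) ^ 2) ∂(ν i j) := by
    intro x
    have hdiff : cdfFn (∑ j, (P i j : ℝ≥0∞) • ((ν i j).conv (η j))) x
        - cdfFn (∑ j, (P i j : ℝ≥0∞) • ((ν i j).conv (ζ j))) x
        = ∑ j, (P i j : ℝ) * ∫ y, D j (x - y) ∂(ν i j) := by
      rw [hcdfT η hη x, hcdfT ζ hζ x, ← Finset.sum_sub_distrib]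
      refine Finset.sum_congr rfl fun j _ => ?_
      haveI := hν i j; haveI := hη j; haveI := hζ j
      rw [cdfFn_conv, cdfFn_conv, ← mul_sub,
        ← integral_sub (integrable_cdf_shift _ _ x) (integrable_cdf_shift _ _ x)]
    rw [hdiff]
    have hconv : ConvexOn ℝ Set.univ (fun t : ℝ => t ^ 2) := Even.convexOn_pow even_two
    have hw1 : ∑ j, ((P i j : ℝ≥0) : ℝ) = 1 := by
      rw [← NNReal.coe_sum, hP i, NNReal.coe_one]
    have hjensen := hconv.map_sum_le (t := Finset.univ)
      (w := fun j => ((P i j : ℝ≥0) : ℝ))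
      (p := fun j => ∫ y, D j (x - y) ∂(ν i j))
      (fun j _ => (P i j).coe_nonneg) hw1 (fun j _ => Set.mem_univ _)
    simp only [smul_eq_mul] at hjensen
    calc ENNReal.ofReal ((∑ j, (P i j : ℝ) * ∫ y, D j (x - y) ∂(ν i j)) ^ 2)
        ≤ ENNReal.ofReal (∑ j, (P i j : ℝ) * (∫ y, D j (x - y) ∂(ν i j)) ^ 2) :=
          ENNReal.ofReal_le_ofReal hjensen
      _ = ∑ j, ENNReal.ofReal ((P i j : ℝ) * (∫ y, D j (x - y) ∂(ν i j)) ^ 2) :=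
          ENNReal.ofReal_sum_of_nonneg (fun j _ => by positivity)
      _ = ∑ j, (P i j : ℝ≥0∞) * ENNReal.ofReal ((∫ y, D j (x - y) ∂(ν i j)) ^ 2) := by
          refine Finset.sum_congr rfl fun j _ => ?_
          rw [ENNReal.ofReal_mul (P i j).coe_nonneg, ENNReal.ofReal_coe_nnreal]
      _ ≤ ∑ j, (P i j : ℝ≥0∞) * ∫⁻ y, ENNReal.ofReal (D j (x - y) ^ 2) ∂(ν i j) := by
          refine Finset.sum_le_sum fun j _ => mul_le_mul_right ?_ _
          haveI := hν i j
          exact ofReal_sq_integral_le (ν i j)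
            ((hDmeas j).comp (measurable_const.sub measurable_id))
            (fun y => hDabs j (x - y))
  -- integrate the pointwise bound
  have hmeasJ : ∀ j, Measurable fun x => ∫⁻ y, ENNReal.ofReal (D j (x - y) ^ 2) ∂(ν i j) := by
    intro j
    haveI := hν i j
    exact Measurable.lintegral_prod_right' (ν := ν i j)
      ((((hDmeas j).comp (measurable_fst.sub measurable_snd)).pow_const 2).ennreal_ofReal)
  have hK : ∫⁻ x, ENNReal.ofReal ((cdfFn (∑ j, (P i j : ℝ≥0∞) • ((ν i j).conv (η j))) x
        - cdfFn (∑ j, (P i j : ℝ≥0∞) • ((ν i j).conv (ζ j))) x) ^ 2)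
      ≤ ENNReal.ofReal (M ^ 2) := by
    calc _ ≤ ∫⁻ x, ∑ j, (P i j : ℝ≥0∞) * ∫⁻ y, ENNReal.ofReal (D j (x - y) ^ 2) ∂(ν i j) :=
          lintegral_mono key
      _ = ∑ j, ∫⁻ x, (P i j : ℝ≥0∞) * ∫⁻ y, ENNReal.ofReal (D j (x - y) ^ 2) ∂(ν i j) :=
          lintegral_finset_sum _ (fun j _ => (hmeasJ j).const_mul _)
      _ = ∑ j, (P i j : ℝ≥0∞) * ∫⁻ x, ∫⁻ y, ENNReal.ofReal (D j (x - y) ^ 2) ∂(ν i j) := by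
          exact Finset.sum_congr rfl fun j _ => lintegral_const_mul _ (hmeasJ j)
      _ = ∑ j, (P i j : ℝ≥0∞) * L j := by
          refine Finset.sum_congr rfl fun j _ => ?_
          congr 1
          haveI := hν i j
          rw [lintegral_lintegral_swap
            ((((hDmeas j).comp (measurable_fst.sub measurable_snd)).pow_const
              2).ennreal_ofReal).aemeasurable]
          refine (lintegral_congr fun y =>
            lintegral_sub_right (fun x => ENNReal.ofReal (D j x ^ 2)) y).trans ?_
          rw [lintegral_const, measure_univ, mul_one]
      _ ≤ ∑ j, (P i j : ℝ≥0∞) * ENNReal.ofReal (M ^ 2) :=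
          Finset.sum_le_sum fun j _ => mul_le_mul_right (hLM j) _
      _ = ENNReal.ofReal (M ^ 2) := by
          rw [← Finset.sum_mul, ← ENNReal.coe_finset_sum, hP i, ENNReal.coe_one, one_mul]
  rw [cramerDist_eq]
  have := ENNReal.toReal_le_of_le_ofReal (by positivity) hK
  calc Real.sqrt _ ≤ Real.sqrt (M ^ 2) := Real.sqrt_le_sqrt this
    _ = M := Real.sqrt_sq hMnonneg
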